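/- There is no 2-2-2-2-2 configuration under the Modified CFLS coloring φ in which all five color classes are matchings. -/
import Mathlib


namespace CFLS

/-- A vertex of `K_n` for `n = 2^(m^2)`: `m` blocks, each a string of `m` bits.
`x k` is the `k`-th block `x^(k+1)`, and `x k j` is its `j`-th bit (most significant first). -/
abbrev Vtx (m : ℕ) := Fin m → Fin m → Bool

/-- The `j`-th bit of a bit string (as a total function of `j : ℕ`). -/
def bitAt {N : ℕ} (f : Fin N → Bool) (j : ℕ) : Bool :=
  if h : j < N then f ⟨j, h⟩ else false

/-- The value of a bit string read as a binary integer, most significant bit first. -/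
def strToNat {N : ℕ} (f : Fin N → Bool) : ℕ :=
  ∑ j : Fin N, if f j then 2 ^ (N - 1 - j.val) else 0

/-- The `k`-th block of a vertex (as a total function of `k : ℕ`). -/
def blockAt {m : ℕ} (x : Vtx m) (k : ℕ) : Fin m → Bool :=
  if h : k < m then x ⟨k, h⟩ else fun _ => false

/-- The least block index at which `x` and `y` differ. -/
noncomputable def firstDiffBlock {m : ℕ} (x y : Vtx m) : ℕ :=
  sInf {k | blockAt x k ≠ blockAt y k}

/-- The position (1-indexed) of the first bit at which two bit strings differ; `0` if equal. -/
noncomputable def firstDiffIdx {N : ℕ} (f g : Fin N → Bool) : ℕ :=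
  if f = g then 0 else sInf {j | bitAt f j ≠ bitAt g j} + 1

/-- The value of a vertex read as a binary integer (concatenation of its blocks). -/
def vtxToNat {m : ℕ} (x : Vtx m) : ℕ :=
  ∑ k : Fin m, strToNat (x k) * (2 ^ m) ^ (m - 1 - k.val)

/-- The colors of the Modified CFLS coloring:
`((i, {x^(i), y^(i)}), i_1, …, i_m, δ_1, …, δ_m)`. -/
abbrev Color (m : ℕ) := (ℕ × Set (Fin m → Bool)) × (Fin m → ℕ) × (Fin m → ℤ)

/-- The Modified CFLS color of the edge `xy` assuming `x ≤ y` as binary integers. -/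
noncomputable def phiAux {m : ℕ} (x y : Vtx m) : Color m :=
  ((firstDiffBlock x y,
      {blockAt x (firstDiffBlock x y), blockAt y (firstDiffBlock x y)}),
   fun k => firstDiffIdx (x k) (y k),
   fun k => if strToNat (x k) ≤ strToNat (y k) then (1 : ℤ) else -1)

/-- The Modified CFLS coloring `φ`. -/
noncomputable def phi {m : ℕ} (x y : Vtx m) : Color m :=
  if vtxToNat x ≤ vtxToNat y then phiAux x y else phiAux y x

/-- The ten edges among five vertices. -/
def edgeList {m : ℕ} (a b c d e : Vtx m) : List (Vtx m × Vtx m) :=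
  [(a,b),(a,c),(a,d),(a,e),(b,c),(b,d),(b,e),(c,d),(c,e),(d,e)]

/-- The number of the ten edges among `a,b,c,d,e` receiving color `col` under `φ`. -/
noncomputable def colorCount {m : ℕ} (a b c d e : Vtx m) (col : Color m) : ℕ :=
  ((edgeList a b c d e).map fun p => phi p.1 p.2).countP fun x =>
    @decide (x = col) (Classical.propDecidable _)

/-- Five pairwise distinct vertices. -/
def Distinct5 {m : ℕ} (a b c d e : Vtx m) : Prop :=
  a ≠ b ∧ a ≠ c ∧ a ≠ d ∧ a ≠ e ∧ b ≠ c ∧ b ≠ d ∧ b ≠ e ∧ c ≠ d ∧ c ≠ e ∧ d ≠ e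

/-- `col` appears on some edge among `a,b,c,d,e`. -/
noncomputable def IsAttained {m : ℕ} (a b c d e : Vtx m) (col : Color m) : Prop :=
  colorCount a b c d e col ≠ 0

/-- A 2-2-2-2-2 configuration: five distinct vertices such that `φ` on the ten edges
among them takes exactly five values, each attained on exactly two edges. -/
def IsConfig22222 {m : ℕ} (a b c d e : Vtx m) : Prop :=
  Distinct5 a b c d e ∧
  ∀ col : Color m, colorCount a b c d e col = 0 ∨ colorCount a b c d e col = 2

/-- The color class of `col` is a matching: two vertex-disjoint edges of color `col`. -/
def IsMatchingClass {m : ℕ} (a b c d e : Vtx m) (col : Color m) : Prop :=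
  ∃ p ∈ edgeList a b c d e, ∃ q ∈ edgeList a b c d e,
    phi p.1 p.2 = col ∧ phi q.1 q.2 = col ∧
    p.1 ≠ q.1 ∧ p.1 ≠ q.2 ∧ p.2 ≠ q.1 ∧ p.2 ≠ q.2

/-- The color class of `col` is a path: two distinct edges of color `col` sharing a vertex. -/
def IsPathClass {m : ℕ} (a b c d e : Vtx m) (col : Color m) : Prop :=
  ∃ p ∈ edgeList a b c d e, ∃ q ∈ edgeList a b c d e,
    p ≠ q ∧ phi p.1 p.2 = col ∧ phi q.1 q.2 = col ∧
    (p.1 = q.1 ∨ p.1 = q.2 ∨ p.2 = q.1 ∨ p.2 = q.2)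

section Aux
variable {m : ℕ}

lemma diff_nonempty {x y : Vtx m} (h : x ≠ y) :
    {k | blockAt x k ≠ blockAt y k}.Nonempty := by
  have hex : ∃ k, x k ≠ y k := by
    by_contra hc
    push_neg at hc
    exact h (funext hc)
  obtain ⟨k, hk⟩ := hex
  refine ⟨k.1, ?_⟩
  simpa [blockAt, k.2] using hk

lemma firstDiffBlock_symm (x y : Vtx m) : firstDiffBlock x y = firstDiffBlock y x := by
  unfold firstDiffBlock
  congr 1
  ext k
  exact ne_comm

lemma firstDiffBlock_spec {x y : Vtx m} (h : x ≠ y) :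
    blockAt x (firstDiffBlock x y) ≠ blockAt y (firstDiffBlock x y) :=
  Nat.sInf_mem (diff_nonempty h)

lemma firstDiffBlock_le {x y : Vtx m} {k : ℕ} (h : blockAt x k ≠ blockAt y k) :
    firstDiffBlock x y ≤ k := Nat.sInf_le h

lemma phi_fst (x y : Vtx m) :
    (phi x y).1 = (firstDiffBlock x y,
      {blockAt x (firstDiffBlock x y), blockAt y (firstDiffBlock x y)}) := by
  unfold phi phiAux
  split_ifs
  · rfl
  · rw [show firstDiffBlock y x = firstDiffBlock x y from (firstDiffBlock_symm x y).symm,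
      Set.pair_comm]

end Aux
section Edges
variable {m : ℕ} {a b c d e : Vtx m}

/-- `z` is one of the five vertices. -/
def In5 (a b c d e z : Vtx m) : Prop := z = a ∨ z = b ∨ z = c ∨ z = d ∨ z = e

lemma mem_endpoints {p : Vtx m × Vtx m} (hp : p ∈ edgeList a b c d e) :
    In5 a b c d e p.1 ∧ In5 a b c d e p.2 := by
  fin_cases hp <;> simp [In5]

lemma ne_endpoints (hd : Distinct5 a b c d e) {p : Vtx m × Vtx m}
    (hp : p ∈ edgeList a b c d e) : p.1 ≠ p.2 := by
  obtain ⟨h1,h2,h3,h4,h5,h6,h7,h8,h9,h10⟩ := hd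
  fin_cases hp <;> simp_all

lemma no_reverse (hd : Distinct5 a b c d e) {p q : Vtx m × Vtx m}
    (hp : p ∈ edgeList a b c d e) (hq : q ∈ edgeList a b c d e)
    (h1 : p.1 = q.2) (h2 : p.2 = q.1) : False := by
  obtain ⟨d1,d2,d3,d4,d5,d6,d7,d8,d9,d10⟩ := hd
  fin_cases hp <;> fin_cases hq <;> simp_all

lemma pair_mem {u v : Vtx m} (hu : In5 a b c d e u) (hv : In5 a b c d e v)
    (huv : u ≠ v) :
    ∃ p ∈ edgeList a b c d e, (p.1 = u ∧ p.2 = v) ∨ (p.1 = v ∧ p.2 = u) := by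
  rcases hu with h|h|h|h|h <;> rcases hv with h'|h'|h'|h'|h' <;> subst h <;> subst h' <;>
    first
      | exact absurd rfl huv
      | (refine ⟨(u,v), ?_, ?_⟩ <;> · simp [edgeList]; done)
      | (refine ⟨(v,u), ?_, ?_⟩ <;> · simp [edgeList]; done)

lemma edgeList_nodup (hd : Distinct5 a b c d e) : (edgeList a b c d e).Nodup := by
  obtain ⟨d1,d2,d3,d4,d5,d6,d7,d8,d9,d10⟩ := hd
  simp [edgeList, Prod.ext_iff, d1,d2,d3,d4,d5,d6,d7,d8,d9,d10]

end Edges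
section Count
variable {m : ℕ} {a b c d e : Vtx m}

lemma card5 {α : Type*} [DecidableEq α] {x1 x2 x3 x4 x5 : α}
    (h12 : x1 ≠ x2) (h13 : x1 ≠ x3) (h14 : x1 ≠ x4) (h15 : x1 ≠ x5)
    (h23 : x2 ≠ x3) (h24 : x2 ≠ x4) (h25 : x2 ≠ x5)
    (h34 : x3 ≠ x4) (h35 : x3 ≠ x5) (h45 : x4 ≠ x5) :
    ({x1, x2, x3, x4, x5} : Finset α).card = 5 := by
  rw [Finset.card_insert_of_notMem (by simp [h12, h13, h14, h15]),
      Finset.card_insert_of_notMem (by simp [h23, h24, h25]),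
      Finset.card_insert_of_notMem (by simp [h34, h35]),
      Finset.card_insert_of_notMem (by simp [h45]),
      Finset.card_singleton]

lemma cover5 {α : Type*} [DecidableEq α] {a b c d e x1 x2 x3 x4 x5 : α}
    (hd : ({a,b,c,d,e} : Finset α).card = 5)
    (hx : ({x1,x2,x3,x4,x5} : Finset α).card = 5)
    (hsub : ({x1,x2,x3,x4,x5} : Finset α) ⊆ {a,b,c,d,e}) :
    ∀ z ∈ ({a,b,c,d,e} : Finset α), z = x1 ∨ z = x2 ∨ z = x3 ∨ z = x4 ∨ z = x5 := by
  have heq := Finset.eq_of_subset_of_card_le hsub (by rw [hd, hx])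
  intro z hz
  rw [← heq] at hz
  simpa using hz

/-- The Bool-valued predicate used in `colorCount`. -/
noncomputable def colPred (col : Color m) : Vtx m × Vtx m → Bool :=
  (fun x => @decide (x = col) (Classical.propDecidable _)) ∘ (fun p => phi p.1 p.2)

lemma colorCount_eq (a b c d e : Vtx m) (col : Color m) :
    colorCount a b c d e col = ((edgeList a b c d e).filter (colPred col)).length := by
  unfold colorCount colPred
  rw [List.countP_map, List.countP_eq_length_filter]

lemma mem_filter_col {col : Color m} {p : Vtx m × Vtx m}
    (hp : p ∈ edgeList a b c d e) (hc : phi p.1 p.2 = col) :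
    p ∈ (edgeList a b c d e).filter (colPred col) := by
  refine List.mem_filter.mpr ⟨hp, ?_⟩
  simp [colPred, hc]

lemma count_pos {p : Vtx m × Vtx m} (hp : p ∈ edgeList a b c d e) :
    colorCount a b c d e (phi p.1 p.2) ≠ 0 := by
  rw [colorCount_eq]
  have := mem_filter_col (col := phi p.1 p.2) hp rfl
  have hne := List.ne_nil_of_mem this
  simpa [List.length_eq_zero_iff] using hne

lemma count_ge_three (hd : Distinct5 a b c d e) {col : Color m}
    {p1 p2 p3 : Vtx m × Vtx m}
    (hp1 : p1 ∈ edgeList a b c d e) (hp2 : p2 ∈ edgeList a b c d e)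
    (hp3 : p3 ∈ edgeList a b c d e)
    (hc1 : phi p1.1 p1.2 = col) (hc2 : phi p2.1 p2.2 = col) (hc3 : phi p3.1 p3.2 = col)
    (h12 : p1 ≠ p2) (h13 : p1 ≠ p3) (h23 : p2 ≠ p3) :
    3 ≤ colorCount a b c d e col := by
  rw [colorCount_eq]
  have hnd : ((edgeList a b c d e).filter (colPred col)).Nodup :=
    (edgeList_nodup hd).filter _
  have hsub : ({p1, p2, p3} : Finset (Vtx m × Vtx m)) ⊆
      ((edgeList a b c d e).filter (colPred col)).toFinset := by
    intro z hz
    simp only [Finset.mem_insert, Finset.mem_singleton] at hz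
    rcases hz with rfl | rfl | rfl <;>
      exact List.mem_toFinset.mpr (mem_filter_col (by assumption) (by assumption))
  have hcard : ({p1, p2, p3} : Finset (Vtx m × Vtx m)).card = 3 := by
    rw [Finset.card_insert_of_notMem (by simp [h12, h13]),
        Finset.card_insert_of_notMem (by simp [h23]), Finset.card_singleton]
  calc 3 = ({p1, p2, p3} : Finset (Vtx m × Vtx m)).card := hcard.symm
    _ ≤ ((edgeList a b c d e).filter (colPred col)).toFinset.card :=
        Finset.card_le_card hsub
    _ = ((edgeList a b c d e).filter (colPred col)).length :=
        List.toFinset_card_of_nodup hnd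

lemma partner (hd : Distinct5 a b c d e)
    (hcnt : ∀ col : Color m, colorCount a b c d e col = 0 ∨ colorCount a b c d e col = 2)
    (hall : ∀ col : Color m, IsAttained a b c d e col → IsMatchingClass a b c d e col)
    {p : Vtx m × Vtx m} (hp : p ∈ edgeList a b c d e) :
    ∃ q ∈ edgeList a b c d e, phi q.1 q.2 = phi p.1 p.2 ∧
      p.1 ≠ q.1 ∧ p.1 ≠ q.2 ∧ p.2 ≠ q.1 ∧ p.2 ≠ q.2 := by
  have hatt : IsAttained a b c d e (phi p.1 p.2) := count_pos hp
  obtain ⟨p', hp', q', hq', hc1, hc2, h11, h12, h21, h22⟩ := hall _ hatt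
  by_cases hpp : p = p'
  · subst hpp
    exact ⟨q', hq', hc2, h11, h12, h21, h22⟩
  by_cases hpq : p = q'
  · subst hpq
    exact ⟨p', hp', hc1, h11.symm, h21.symm, h12.symm, h22.symm⟩
  · exfalso
    have hp'q' : p' ≠ q' := fun h => h11 (by rw [h])
    have h3 : 3 ≤ colorCount a b c d e (phi p.1 p.2) :=
      count_ge_three hd hp hp' hq' rfl hc1 hc2 hpp hpq hp'q'
    rcases hcnt (phi p.1 p.2) with h | h <;> omega

end Count
section Main
variable {m : ℕ} {a b c d e : Vtx m}

lemma in5_iff {z : Vtx m} :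
    z ∈ ({a, b, c, d, e} : Finset (Vtx m)) ↔ In5 a b c d e z := by
  simp [In5]

lemma no_32 {x1 x2 x3 y1 y2 : Vtx m} {i0 : ℕ}
    (hd : Distinct5 a b c d e)
    (hcnt : ∀ col : Color m, colorCount a b c d e col = 0 ∨ colorCount a b c d e col = 2)
    (hall : ∀ col : Color m, IsAttained a b c d e col → IsMatchingClass a b c d e col)
    (hx1 : In5 a b c d e x1) (hx2 : In5 a b c d e x2) (hx3 : In5 a b c d e x3)
    (hy1 : In5 a b c d e y1) (hy2 : In5 a b c d e y2)
    (d12 : x1 ≠ x2) (d13 : x1 ≠ x3) (d1y1 : x1 ≠ y1) (d1y2 : x1 ≠ y2)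
    (d23 : x2 ≠ x3) (d2y1 : x2 ≠ y1) (d2y2 : x2 ≠ y2)
    (d3y1 : x3 ≠ y1) (d3y2 : x3 ≠ y2) (dy : y1 ≠ y2)
    (hFne : ∀ u v : Vtx m, In5 a b c d e u → In5 a b c d e v → u ≠ v →
      blockAt u i0 = blockAt v i0 → firstDiffBlock u v ≠ i0)
    (hBeq : ∀ u v : Vtx m, In5 a b c d e u → In5 a b c d e v → u ≠ v →
      firstDiffBlock u v ≠ i0 → blockAt u i0 = blockAt v i0)
    (hB12 : blockAt x1 i0 = blockAt x2 i0)
    (hB13 : blockAt x1 i0 = blockAt x3 i0)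
    (hBy : blockAt y1 i0 = blockAt y2 i0)
    (hBxy : blockAt x1 i0 ≠ blockAt y1 i0) : False := by
  -- every vertex is one of the five labels
  have hcov : ∀ z, In5 a b c d e z →
      z = x1 ∨ z = x2 ∨ z = x3 ∨ z = y1 ∨ z = y2 := by
    obtain ⟨f1, f2, f3, f4, f5, f6, f7, f8, f9, f10⟩ := hd
    have hA : ({a, b, c, d, e} : Finset (Vtx m)).card = 5 :=
      card5 f1 f2 f3 f4 f5 f6 f7 f8 f9 f10
    have hX : ({x1, x2, x3, y1, y2} : Finset (Vtx m)).card = 5 :=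
      card5 d12 d13 d1y1 d1y2 d23 d2y1 d2y2 d3y1 d3y2 dy
    have hsub : ({x1, x2, x3, y1, y2} : Finset (Vtx m)) ⊆ {a, b, c, d, e} := by
      intro z hz
      simp only [Finset.mem_insert, Finset.mem_singleton] at hz
      rw [in5_iff]
      rcases hz with rfl | rfl | rfl | rfl | rfl
      exacts [hx1, hx2, hx3, hy1, hy2]
    intro z hz
    exact cover5 hA hX hsub z (in5_iff.mpr hz)
  -- membership classification away from x3
  have hside : ∀ z, In5 a b c d e z → z ≠ x3 →
      (z = y1 ∨ z = y2) ∨ (z = x1 ∨ z = x2) := by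
    intro z hz hz3
    rcases hcov z hz with rfl | rfl | rfl | rfl | rfl
    · exact Or.inr (Or.inl rfl)
    · exact Or.inr (Or.inr rfl)
    · exact absurd rfl hz3
    · exact Or.inl (Or.inl rfl)
    · exact Or.inl (Or.inr rfl)
  -- the key construction, applied to s = x1 and s = x2
  have key : ∀ s : Vtx m, In5 a b c d e s → (s = x1 ∨ s = x2) → s ≠ x3 →
      blockAt x1 i0 = blockAt s i0 →
      ∃ p ∈ edgeList a b c d e, ∃ q ∈ edgeList a b c d e,
        ((p.1 = s ∧ p.2 = x3) ∨ (p.1 = x3 ∧ p.2 = s)) ∧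
        ((q.1 = y1 ∧ q.2 = y2) ∨ (q.1 = y2 ∧ q.2 = y1)) ∧
        phi q.1 q.2 = phi p.1 p.2 := by
    intro s hs hs12 hs3 hBs
    obtain ⟨p, hpmem, hporient⟩ := pair_mem hs hx3 hs3
    obtain ⟨q, hqmem, hqc, hq1, hq2, hq3, hq4⟩ := partner hd hcnt hall hpmem
    have hqe := mem_endpoints hqmem
    have hqne := ne_endpoints hd hqmem
    have h4 : q.1 ≠ s ∧ q.1 ≠ x3 ∧ q.2 ≠ s ∧ q.2 ≠ x3 := by
      rcases hporient with ⟨h1, h2⟩ | ⟨h1, h2⟩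
      · exact ⟨fun h => hq1 (by rw [h1, h]), fun h => hq3 (by rw [h2, h]),
          fun h => hq2 (by rw [h1, h]), fun h => hq4 (by rw [h2, h])⟩
      · exact ⟨fun h => hq3 (by rw [h2, h]), fun h => hq1 (by rw [h1, h]),
          fun h => hq4 (by rw [h2, h]), fun h => hq2 (by rw [h1, h])⟩
    obtain ⟨hq1s, hq1x3, hq2s, hq2x3⟩ := h4
    -- first components of the colors agree
    have hfst := congrArg Prod.fst hqc
    rw [phi_fst q.1 q.2, phi_fst p.1 p.2, Prod.mk.injEq] at hfst
    obtain ⟨hFq, -⟩ := hfst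
    have hBsx3 : blockAt s i0 = blockAt x3 i0 := hBs.symm.trans hB13
    have hFp : firstDiffBlock p.1 p.2 ≠ i0 := by
      rcases hporient with ⟨h1, h2⟩ | ⟨h1, h2⟩
      · rw [h1, h2]; exact hFne s x3 hs hx3 hs3 hBsx3
      · rw [h1, h2]; exact hFne x3 s hx3 hs (fun h => hs3 h.symm) hBsx3.symm
    have hF : firstDiffBlock q.1 q.2 ≠ i0 := by rw [hFq]; exact hFp
    have hBq : blockAt q.1 i0 = blockAt q.2 i0 := hBeq q.1 q.2 hqe.1 hqe.2 hqne hF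
    -- both endpoints of q lie in {y1, y2}
    have hxb : ∀ z, (z = x1 ∨ z = x2) → blockAt z i0 = blockAt x1 i0 := by
      rintro z (rfl | rfl)
      · rfl
      · exact hB12.symm
    have hyb : ∀ z, (z = y1 ∨ z = y2) → blockAt z i0 = blockAt y1 i0 := by
      rintro z (rfl | rfl)
      · rfl
      · exact hBy.symm
    rcases hside q.1 hqe.1 hq1x3 with hy | hx
    · rcases hside q.2 hqe.2 hq2x3 with hy' | hx'
      · -- both in {y1,y2}
        refine ⟨p, hpmem, q, hqmem, hporient, ?_, hqc⟩
        rcases hy with h | h <;> rcases hy' with h' | h'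
        · exact absurd (h.trans h'.symm) hqne
        · exact Or.inl ⟨h, h'⟩
        · exact Or.inr ⟨h, h'⟩
        · exact absurd (h.trans h'.symm) hqne
      · exfalso
        have h1 := hyb q.1 hy
        have h2 := hxb q.2 hx'
        exact hBxy (h2.symm.trans (hBq.symm.trans h1))
    · rcases hside q.2 hqe.2 hq2x3 with hy' | hx'
      · exfalso
        have h1 := hxb q.1 hx
        have h2 := hyb q.2 hy'
        exact hBxy (h1.symm.trans (hBq.trans h2))
      · exfalso
        rcases hs12 with rfl | rfl
        · -- s = x1, so both endpoints must be x2
          have e1 : q.1 = x2 := hx.resolve_left hq1s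
          have e2 : q.2 = x2 := hx'.resolve_left hq2s
          exact hqne (e1.trans e2.symm)
        · have e1 : q.1 = x1 := hx.resolve_right hq1s
          have e2 : q.2 = x1 := hx'.resolve_right hq2s
          exact hqne (e1.trans e2.symm)
  obtain ⟨p1, hp1, q1, hq1m, hor1, hoq1, hc1⟩ :=
    key x1 hx1 (Or.inl rfl) d13 rfl
  obtain ⟨p2, hp2, q2, hq2m, hor2, hoq2, hc2⟩ :=
    key x2 hx2 (Or.inr rfl) d23 hB12
  have hq12 : q1 = q2 := by
    rcases hoq1 with ⟨ha1, ha2⟩ | ⟨ha1, ha2⟩ <;> rcases hoq2 with ⟨hb1, hb2⟩ | ⟨hb1, hb2⟩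
    · exact Prod.ext_iff.mpr ⟨ha1.trans hb1.symm, ha2.trans hb2.symm⟩
    · exact (no_reverse hd hq1m hq2m (ha1.trans hb2.symm) (ha2.trans hb1.symm)).elim
    · exact (no_reverse hd hq1m hq2m (ha1.trans hb2.symm) (ha2.trans hb1.symm)).elim
    · exact Prod.ext_iff.mpr ⟨ha1.trans hb1.symm, ha2.trans hb2.symm⟩
  have hcc : phi p2.1 p2.2 = phi q1.1 q1.2 := by
    rw [hq12]; exact hc2.symm
  have hp1p2 : p1 ≠ p2 := by
    rcases hor1 with ⟨u1, u2⟩ | ⟨u1, u2⟩ <;> rcases hor2 with ⟨v1, v2⟩ | ⟨v1, v2⟩ <;>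
      intro h <;> rw [h] at u1 u2 <;>
      first
        | exact d12 (u1.symm.trans v1)
        | exact d13 (u1.symm.trans v1)
        | exact d13 (u2.symm.trans v2)
        | exact d12 (u2.symm.trans v2)
  have hp1q1 : p1 ≠ q1 := by
    rcases hor1 with ⟨u1, u2⟩ | ⟨u1, u2⟩ <;> rcases hoq1 with ⟨w1, w2⟩ | ⟨w1, w2⟩ <;>
      intro h <;> rw [h] at u1 u2 <;>
      first
        | exact d1y1 (u1.symm.trans w1)
        | exact d1y2 (u1.symm.trans w1)
        | exact d3y1 (u1.symm.trans w1)
        | exact d3y2 (u1.symm.trans w1)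
  have hp2q1 : p2 ≠ q1 := by
    rcases hor2 with ⟨u1, u2⟩ | ⟨u1, u2⟩ <;> rcases hoq1 with ⟨w1, w2⟩ | ⟨w1, w2⟩ <;>
      intro h <;> rw [h] at u1 u2 <;>
      first
        | exact d2y1 (u1.symm.trans w1)
        | exact d2y2 (u1.symm.trans w1)
        | exact d3y1 (u1.symm.trans w1)
        | exact d3y2 (u1.symm.trans w1)
  have h3 : 3 ≤ colorCount a b c d e (phi q1.1 q1.2) :=
    count_ge_three hd hp1 hp2 hq1m hc1.symm hcc rfl hp1p2 hp1q1 hp2q1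
  rcases hcnt (phi q1.1 q1.2) with h | h <;> omega

end Main
/-- There is no 2-2-2-2-2 configuration under `φ` in which all five color classes are
matchings. -/
theorem no_five_matchings (m : ℕ) (hm : 0 < m) :
    ¬ ∃ a b c d e : Vtx m, IsConfig22222 a b c d e ∧
      ∀ col : Color m, IsAttained a b c d e col → IsMatchingClass a b c d e col := by
  rintro ⟨a, b, c, d, e, ⟨hd, hcnt⟩, hall⟩
  obtain ⟨f1, f2, f3, f4, f5, f6, f7, f8, f9, f10⟩ := id hd
  -- the minimal block index at which some pair of the five vertices differs
  set S : Set ℕ :=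
    {k | ∃ u v : Vtx m, In5 a b c d e u ∧ In5 a b c d e v ∧ blockAt u k ≠ blockAt v k}
    with hS
  have hSne : S.Nonempty := by
    obtain ⟨k, hk⟩ := diff_nonempty f1
    exact ⟨k, a, b, Or.inl rfl, Or.inr (Or.inl rfl), hk⟩
  set i0 := sInf S with hi0
  have hmemS := Nat.sInf_mem hSne
  rw [hS] at hmemS
  obtain ⟨u0, v0, hu0, hv0, hB0⟩ := hmemS
  have hmin : ∀ (u v : Vtx m) (k : ℕ), In5 a b c d e u → In5 a b c d e v →
      blockAt u k ≠ blockAt v k → i0 ≤ k :=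
    fun u v k hu hv h => Nat.sInf_le ⟨u, v, hu, hv, h⟩
  have hFeq : ∀ u v : Vtx m, In5 a b c d e u → In5 a b c d e v →
      blockAt u i0 ≠ blockAt v i0 → firstDiffBlock u v = i0 := by
    intro u v hu hv hB
    have hne : u ≠ v := fun h => hB (by rw [h])
    exact le_antisymm (firstDiffBlock_le hB)
      (hmin u v _ hu hv (firstDiffBlock_spec hne))
  have hFne : ∀ u v : Vtx m, In5 a b c d e u → In5 a b c d e v → u ≠ v →
      blockAt u i0 = blockAt v i0 → firstDiffBlock u v ≠ i0 := by
    intro u v hu hv hne hB heq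
    have hsp := firstDiffBlock_spec hne
    rw [heq] at hsp
    exact hsp hB
  have hBeq : ∀ u v : Vtx m, In5 a b c d e u → In5 a b c d e v → u ≠ v →
      firstDiffBlock u v ≠ i0 → blockAt u i0 = blockAt v i0 := by
    intro u v hu hv hne hF
    by_contra hB
    exact hF (hFeq u v hu hv hB)
  -- every vertex has a "twin" with the same block at level i0
  have twin : ∀ v : Vtx m, In5 a b c d e v →
      ∃ u, In5 a b c d e u ∧ u ≠ v ∧ blockAt u i0 = blockAt v i0 := by
    intro v hv
    by_contra hno
    push_neg at hno
    obtain ⟨u, hu, huv⟩ : ∃ u, In5 a b c d e u ∧ u ≠ v := by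
      by_cases hva : v = a
      · exact ⟨b, Or.inr (Or.inl rfl), by rw [hva]; exact f1.symm⟩
      · exact ⟨a, Or.inl rfl, fun h => hva h.symm⟩
    have hBuv : blockAt u i0 ≠ blockAt v i0 := hno u hu huv
    obtain ⟨p, hpmem, hporient⟩ := pair_mem hu hv huv
    obtain ⟨q, hqmem, hqc, hq1, hq2, hq3, hq4⟩ := partner hd hcnt hall hpmem
    have hqe := mem_endpoints hqmem
    have hfst := congrArg Prod.fst hqc
    rw [phi_fst q.1 q.2, phi_fst p.1 p.2, Prod.mk.injEq] at hfst
    obtain ⟨hFq, hSet⟩ := hfst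
    have hFp : firstDiffBlock p.1 p.2 = i0 := by
      rcases hporient with ⟨h1, h2⟩ | ⟨h1, h2⟩
      · rw [h1, h2]; exact hFeq u v hu hv hBuv
      · rw [h1, h2]; exact hFeq v u hv hu (Ne.symm hBuv)
    rw [hFq, hFp] at hSet
    have hvmem : blockAt v i0 ∈
        ({blockAt q.1 i0, blockAt q.2 i0} : Set (Fin m → Bool)) := by
      rw [hSet]
      rcases hporient with ⟨h1, h2⟩ | ⟨h1, h2⟩
      · rw [h2]; exact Or.inr rfl
      · rw [h1]; exact Or.inl rfl
    have hdisj : blockAt v i0 = blockAt q.1 i0 ∨ blockAt v i0 = blockAt q.2 i0 := by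
      simpa using hvmem
    have hq1v : q.1 ≠ v ∧ q.2 ≠ v := by
      rcases hporient with ⟨h1, h2⟩ | ⟨h1, h2⟩
      · exact ⟨fun h => hq3 (by rw [h2, h]), fun h => hq4 (by rw [h2, h])⟩
      · exact ⟨fun h => hq1 (by rw [h1, h]), fun h => hq2 (by rw [h1, h])⟩
    rcases hdisj with h | h
    · exact hno q.1 hqe.1 hq1v.1 h.symm
    · exact hno q.2 hqe.2 hq1v.2 h.symm
  -- twins of u0 and v0
  obtain ⟨u1, hu1, hu1ne, hBu1⟩ := twin u0 hu0
  obtain ⟨v1, hv1, hv1ne, hBv1⟩ := twin v0 hv0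
  have du0v0 : u0 ≠ v0 := fun h => hB0 (by rw [h])
  have du0v1 : u0 ≠ v1 := by
    intro h
    have h' := hBv1
    rw [← h] at h'
    exact hB0 h'
  have du1v0 : u1 ≠ v0 := by
    intro h
    have h' := hBu1
    rw [h] at h'
    exact hB0 h'.symm
  have du1v1 : u1 ≠ v1 := by
    intro h
    have h' := hBu1
    rw [h, hBv1] at h'
    exact hB0 h'.symm
  have du0u1 : u0 ≠ u1 := Ne.symm hu1ne
  have dv0v1 : v0 ≠ v1 := Ne.symm hv1ne
  -- the fifth vertex
  have hcA : ({a, b, c, d, e} : Finset (Vtx m)).card = 5 :=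
    card5 f1 f2 f3 f4 f5 f6 f7 f8 f9 f10
  obtain ⟨w, hwin, hw0, hw1, hw2, hw3⟩ :
      ∃ w, In5 a b c d e w ∧ w ≠ u0 ∧ w ≠ u1 ∧ w ≠ v0 ∧ w ≠ v1 := by
    by_contra hcon
    push_neg at hcon
    have hsub : ({a, b, c, d, e} : Finset (Vtx m)) ⊆ {u0, u1, v0, v1} := by
      intro z hz
      have hz5 := in5_iff.mp hz
      simp only [Finset.mem_insert, Finset.mem_singleton]
      by_cases h0 : z = u0
      · exact Or.inl h0
      by_cases h1 : z = u1
      · exact Or.inr (Or.inl h1)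
      by_cases h2 : z = v0
      · exact Or.inr (Or.inr (Or.inl h2))
      · exact Or.inr (Or.inr (Or.inr (hcon z hz5 h0 h1 h2)))
    have h4 : ({u0, u1, v0, v1} : Finset (Vtx m)).card ≤ 4 := by
      have c1 := Finset.card_insert_le u0 ({u1, v0, v1} : Finset (Vtx m))
      have c2 := Finset.card_insert_le u1 ({v0, v1} : Finset (Vtx m))
      have c3 := Finset.card_insert_le v0 ({v1} : Finset (Vtx m))
      simp only [Finset.card_singleton] at c3
      omega
    have h5 := Finset.card_le_card hsub
    rw [hcA] at h5
    omega
  -- the twin of w determines its side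
  obtain ⟨t, hti, htw, hBt⟩ := twin w hwin
  have hX5 : ({u0, u1, v0, v1, w} : Finset (Vtx m)).card = 5 :=
    card5 du0u1 du0v0 du0v1 (Ne.symm hw0) du1v0 du1v1 (Ne.symm hw1)
      dv0v1 (Ne.symm hw2) (Ne.symm hw3)
  have hsub5 : ({u0, u1, v0, v1, w} : Finset (Vtx m)) ⊆ {a, b, c, d, e} := by
    intro z hz
    simp only [Finset.mem_insert, Finset.mem_singleton] at hz
    rw [in5_iff]
    rcases hz with rfl | rfl | rfl | rfl | rfl
    exacts [hu0, hu1, hv0, hv1, hwin]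
  have htc := cover5 hcA hX5 hsub5 t (in5_iff.mpr hti)
  have hcases : blockAt w i0 = blockAt u0 i0 ∨ blockAt w i0 = blockAt v0 i0 := by
    rcases htc with rfl | rfl | rfl | rfl | rfl
    · exact Or.inl hBt.symm
    · exact Or.inl (hBt.symm.trans hBu1)
    · exact Or.inr hBt.symm
    · exact Or.inr (hBt.symm.trans hBv1)
    · exact absurd rfl htw
  rcases hcases with hcw | hcw
  · -- X = {u0, u1, w}, Y = {v0, v1}
    have dwv0 : w ≠ v0 := hw2
    have dwv1 : w ≠ v1 := hw3
    exact no_32 hd hcnt hall hu0 hu1 hwin hv0 hv1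
      du0u1 (Ne.symm hw0) du0v0 du0v1 (Ne.symm hw1) du1v0 du1v1 dwv0 dwv1 dv0v1
      hFne hBeq hBu1.symm hcw.symm hBv1.symm hB0
  · -- X = {v0, v1, w}, Y = {u0, u1}
    have dv0u0 : v0 ≠ u0 := Ne.symm du0v0
    have dv0u1 : v0 ≠ u1 := Ne.symm du1v0
    have dv1u0 : v1 ≠ u0 := Ne.symm du0v1
    have dv1u1 : v1 ≠ u1 := Ne.symm du1v1
    exact no_32 hd hcnt hall hv0 hv1 hwin hu0 hu1
      dv0v1 (Ne.symm hw2) dv0u0 dv0u1 (Ne.symm hw3) dv1u0 dv1u1 hw0 hw1 du0u1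
      hFne hBeq hBv1.symm hcw.symm hBu1.symm (Ne.symm hB0)

end CFLS
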